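/- Define s(d) as the number of positive integers e < d with e | d and (e+1) | (d+1), and S(N) = s(1) + ... + s(N). Then S(N) = N + O(N^{1/2}); more precisely, N - N^{1/2} - O(N^{1/2}) ≤ S(N) ≤ N - N^{1/2} + O(log N). -/

import Mathlib

/-- `sCount d` is the number of positive integers `e < d` with `e ∣ d` and
`(e+1) ∣ (d+1)`. -/
def sCount (d : ℕ) : ℕ :=
  ((Finset.range d).filter fun e => 0 < e ∧ e ∣ d ∧ (e + 1) ∣ (d + 1)).card

/-- `SBig N = s(1) + ⋯ + s(N)`. -/
def SBig (N : ℕ) : ℕ := ∑ d ∈ Finset.Icc 1 N, sCount d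

lemma SBig_eq (N : ℕ) :
    SBig N = ∑ e ∈ Finset.Icc 1 N, (N - e) / (e * (e + 1)) := by
  classical
  have h1 : SBig N = ((Finset.Icc 1 N).sigma fun d =>
      (Finset.range d).filter fun e => 0 < e ∧ e ∣ d ∧ (e + 1) ∣ (d + 1)).card := by
    rw [Finset.card_sigma]; rfl
  have h2 : ∑ e ∈ Finset.Icc 1 N, (N - e) / (e * (e + 1)) =
      ((Finset.Icc 1 N).sigma fun e => Finset.Icc 1 ((N - e) / (e * (e + 1)))).card := by
    rw [Finset.card_sigma]
    exact Finset.sum_congr rfl fun e _ => (Nat.card_Icc 1 _).symm ▸ rfl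
  rw [h1, h2]
  refine Finset.card_bij' (fun p _ => ⟨p.2, (p.1 - p.2) / (p.2 * (p.2 + 1))⟩)
    (fun q _ => ⟨q.1 + q.2 * (q.1 * (q.1 + 1)), q.1⟩) ?_ ?_ ?_ ?_
  · rintro ⟨d, e⟩ hp
    simp only [Finset.mem_sigma, Finset.mem_Icc, Finset.mem_filter, Finset.mem_range] at hp ⊢
    obtain ⟨⟨hd1, hdN⟩, hed, he0, hde, hde1⟩ := hp
    have hb : 0 < e * (e + 1) := by positivity
    have hdvd : e * (e + 1) ∣ d - e := by
      refine Nat.Coprime.mul_dvd_of_dvd_of_dvd ?_ (Nat.dvd_sub hde dvd_rfl) ?_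
      · simpa using Nat.coprime_self_add_right.mpr (Nat.coprime_one_right e)
      · have : d - e = (d + 1) - (e + 1) := by omega
        rw [this]; exact Nat.dvd_sub hde1 dvd_rfl
    refine ⟨⟨he0, le_trans (le_of_lt hed) hdN⟩, ?_, ?_⟩
    · rw [Nat.one_le_div_iff hb]
      exact Nat.le_of_dvd (by omega) hdvd
    · exact Nat.div_le_div_right (by omega)
  · rintro ⟨e, m⟩ hq
    simp only [Finset.mem_sigma, Finset.mem_Icc, Finset.mem_filter, Finset.mem_range] at hq ⊢
    obtain ⟨⟨he1, heN⟩, hm1, hmQ⟩ := hq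
    have hb : 0 < e * (e + 1) := by positivity
    have hmb : m * (e * (e + 1)) ≤ N - e := (Nat.le_div_iff_mul_le hb).mp hmQ
    refine ⟨⟨by omega, by omega⟩, by nlinarith, ?_, ?_, ?_⟩
    · omega
    · exact ⟨1 + m * (e + 1), by ring⟩
    · exact ⟨1 + m * e, by ring⟩
  · rintro ⟨d, e⟩ hp
    simp only [Finset.mem_sigma, Finset.mem_Icc, Finset.mem_filter, Finset.mem_range] at hp
    obtain ⟨⟨hd1, hdN⟩, hed, he0, hde, hde1⟩ := hp
    have hdvd : e * (e + 1) ∣ d - e := by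
      refine Nat.Coprime.mul_dvd_of_dvd_of_dvd ?_ (Nat.dvd_sub hde dvd_rfl) ?_
      · simpa using Nat.coprime_self_add_right.mpr (Nat.coprime_one_right e)
      · have : d - e = (d + 1) - (e + 1) := by omega
        rw [this]; exact Nat.dvd_sub hde1 dvd_rfl
    have : (d - e) / (e * (e + 1)) * (e * (e + 1)) = d - e := Nat.div_mul_cancel hdvd
    dsimp only
    rw [show e + (d - e) / (e * (e + 1)) * (e * (e + 1)) = d from by omega]
  · rintro ⟨e, m⟩ hq
    simp only [Finset.mem_sigma, Finset.mem_Icc] at hq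
    obtain ⟨⟨he1, heN⟩, hm⟩ := hq
    have hb : 0 < e * (e + 1) := by positivity
    dsimp only
    rw [show e + m * (e * (e + 1)) - e = m * (e * (e + 1)) from by omega,
      Nat.mul_div_cancel _ hb]

lemma tele (n : ℕ) : ∑ e ∈ Finset.Icc 1 n, ((1:ℝ)/e - 1/(e+1)) = 1 - 1/(n+1) := by
  induction n with
  | zero => simp
  | succ n ih =>
    rw [Finset.sum_Icc_succ_top (by omega), ih]
    push_cast
    ring

lemma nat_lt_div_succ_mul (a b : ℕ) (h : 0 < b) : a < (a / b + 1) * b := by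
  have h1 := Nat.div_add_mod a b
  have h2 := Nat.mod_lt a h
  generalize a / b = q at *
  generalize a % b = r at *
  nlinarith


lemma SBig_bounds (N : ℕ) (hN : 1 ≤ N) :
    (N:ℝ) * (1 - 1/(Nat.sqrt (N+1) : ℝ)) - 2*((Nat.sqrt (N+1) : ℝ) - 1) ≤ SBig N ∧
    (SBig N : ℝ) ≤ (N:ℝ) * (1 - 1/(Nat.sqrt (N+1) : ℝ)) := by
  set s := Nat.sqrt (N + 1) with hs
  have hs1 : 1 ≤ s := Nat.sqrt_pos.mpr (by omega)
  have hsN : s - 1 ≤ N := by have := Nat.sqrt_le_self (N + 1); omega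
  -- restrict the sum
  have hrestrict : SBig N = ∑ e ∈ Finset.Icc 1 (s - 1), (N - e) / (e * (e + 1)) := by
    rw [SBig_eq]
    refine (Finset.sum_subset (Finset.Icc_subset_Icc_right hsN) ?_).symm
    intro e heN hes
    simp only [Finset.mem_Icc] at heN hes
    have hse : s ≤ e := by omega
    have h3 := Nat.lt_succ_sqrt' (N + 1)
    rw [← hs] at h3
    have h4 : (s + 1) * (s + 1) ≤ (e + 1) * (e + 1) :=
      Nat.mul_le_mul (by omega) (by omega)
    have h5 : (e + 1) * (e + 1) = e * (e + 1) + (e + 1) := by ring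
    have h6 : N < e * (e + 1) + e := by nlinarith [sq_nonneg (s+1)]
    apply Nat.div_eq_of_lt
    generalize e * (e + 1) = b at h6 ⊢
    omega
  -- cast to ℝ
  have hcast : (SBig N : ℝ) =
      ∑ e ∈ Finset.Icc 1 (s - 1), (((N - e) / (e * (e + 1)) : ℕ) : ℝ) := by
    rw [hrestrict]; push_cast; rfl
  have hcard : ((s - 1 : ℕ) : ℝ) = (s : ℝ) - 1 := by
    push_cast [hs1]; ring
  have htele : ∑ e ∈ Finset.Icc 1 (s - 1), ((1:ℝ)/e - 1/(e+1)) = 1 - 1/(s:ℝ) := by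
    rw [tele, hcard]; ring_nf
  -- per-term bounds
  have hterm : ∀ e ∈ Finset.Icc 1 (s - 1),
      (N:ℝ) * ((1:ℝ)/e - 1/(e+1)) - 2 ≤ (((N - e) / (e * (e + 1)) : ℕ) : ℝ) ∧
      (((N - e) / (e * (e + 1)) : ℕ) : ℝ) ≤ (N:ℝ) * ((1:ℝ)/e - 1/(e+1)) := by
    intro e he
    simp only [Finset.mem_Icc] at he
    obtain ⟨he1, he2⟩ := he
    have heN : e ≤ N := by omega
    have hbnat : 0 < e * (e + 1) := by positivity
    have hbR : (0:ℝ) < (e:ℝ) * ((e:ℝ) + 1) := by positivity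
    have heR : (1:ℝ) ≤ (e:ℝ) := by exact_mod_cast he1
    have hfrac : (1:ℝ)/(e:ℝ) - 1/((e:ℝ)+1) = 1/((e:ℝ) * ((e:ℝ)+1)) := by
      field_simp
      ring
    set Q : ℕ := (N - e) / (e * (e + 1)) with hQ
    constructor
    · -- lower
      have h1 : N - e < (Q + 1) * (e * (e + 1)) := nat_lt_div_succ_mul _ _ hbnat
      have h2 : (N:ℝ) - (e:ℝ) < ((Q:ℝ) + 1) * ((e:ℝ) * ((e:ℝ)+1)) := by
        have := (Nat.cast_lt (α := ℝ)).mpr h1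
        rw [Nat.cast_sub heN] at this
        push_cast at this
        convert this using 2
      have heb : (e:ℝ) ≤ (e:ℝ) * ((e:ℝ) + 1) := by nlinarith
      rw [hfrac, mul_one_div, sub_le_iff_le_add, div_le_iff₀ hbR]
      nlinarith
    · -- upper
      have h1 : Q * (e * (e + 1)) ≤ N :=
        le_trans (Nat.div_mul_le_self _ _) (Nat.sub_le N e)
      have h2 : (Q:ℝ) * ((e:ℝ) * ((e:ℝ)+1)) ≤ (N:ℝ) := by exact_mod_cast h1
      rw [hfrac, mul_one_div, le_div_iff₀ hbR]
      exact h2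
  constructor
  · calc (N:ℝ) * (1 - 1/(s:ℝ)) - 2*((s:ℝ) - 1)
        = ∑ e ∈ Finset.Icc 1 (s - 1), ((N:ℝ) * ((1:ℝ)/e - 1/(e+1)) - 2) := by
          rw [Finset.sum_sub_distrib, ← Finset.mul_sum, htele, Finset.sum_const,
            Nat.card_Icc]
          simp only [nsmul_eq_mul]
          rw [show (s - 1 + 1 - 1 : ℕ) = s - 1 from by omega, hcard]
          ring
      _ ≤ (SBig N : ℝ) := by
          rw [hcast]
          exact Finset.sum_le_sum fun e he => (hterm e he).1
  · calc (SBig N : ℝ)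
        ≤ ∑ e ∈ Finset.Icc 1 (s - 1), (N:ℝ) * ((1:ℝ)/e - 1/(e+1)) := by
          rw [hcast]
          exact Finset.sum_le_sum fun e he => (hterm e he).2
      _ = (N:ℝ) * (1 - 1/(s:ℝ)) := by rw [← Finset.mul_sum, htele]

/-- `S(N) = N + O(N^{1/2})`; more precisely
`N - √N - O(√N) ≤ S(N) ≤ N - √N + O(log N)`. -/
theorem SBig_asymptotics :
    (∃ C : ℝ, 0 < C ∧ ∀ N : ℕ, 1 ≤ N →
      |(SBig N : ℝ) - N| ≤ C * Real.sqrt N) ∧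
    (∃ C : ℝ, 0 < C ∧ ∀ N : ℕ, 1 ≤ N →
      ((N : ℝ) - Real.sqrt N - C * Real.sqrt N ≤ (SBig N : ℝ)) ∧
      ((SBig N : ℝ) ≤ (N : ℝ) - Real.sqrt N + C * Real.log N)) := by
  have key : ∀ N : ℕ, 1 ≤ N →
      ((N : ℝ) - Real.sqrt N - 7 * Real.sqrt N ≤ (SBig N : ℝ)) ∧
      ((SBig N : ℝ) ≤ (N : ℝ) - Real.sqrt N + 7 * Real.log N) := by
    intro N hN
    obtain ⟨hlow, hupp⟩ := SBig_bounds N hN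
    set s := Nat.sqrt (N + 1) with hs
    set t : ℝ := (s : ℝ) with hts
    set a : ℝ := Real.sqrt N with hta
    set b : ℝ := Real.sqrt (N + 1) with htb
    have hN1 : (1:ℝ) ≤ (N:ℝ) := by exact_mod_cast hN
    have hs1 : 1 ≤ s := Nat.sqrt_pos.mpr (by omega)
    have ht1 : (1:ℝ) ≤ t := by rw [hts]; exact_mod_cast hs1
    have ht0 : (0:ℝ) < t := by linarith
    have ha1 : (1:ℝ) ≤ a := Real.one_le_sqrt.mpr hN1
    have ha2 : a ^ 2 = N := Real.sq_sqrt (by linarith)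
    have hb2 : b ^ 2 = (N:ℝ) + 1 := by
      rw [htb]
      rw [show ((N:ℝ) + 1) = ((N + 1 : ℕ) : ℝ) from by push_cast; ring] at *
      exact Real.sq_sqrt (by positivity)
    have hb0 : (0:ℝ) ≤ b := Real.sqrt_nonneg _
    have hb1 : (1:ℝ) < b := by nlinarith
    have htb' : t ≤ b := by
      have h1 : (s:ℝ) ^ 2 ≤ (N:ℝ) + 1 := by
        have := Nat.sqrt_le' (N + 1)
        exact_mod_cast this
      nlinarith
    have hbt : b < t + 1 := by
      have h0 : N + 1 < (s + 1) ^ 2 := by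
        rw [hs]; exact Nat.lt_succ_sqrt' (N + 1)
      have h1 : (N:ℝ) + 1 < (t + 1) ^ 2 := by
        rw [hts]; exact_mod_cast h0
      nlinarith
    have hba : b ≤ a + 1 := by nlinarith
    have hNt_le : (N:ℝ) / t ≤ b + 1 := by
      rw [div_le_iff₀ ht0]
      nlinarith
    have hNt_ge : a - 1 ≤ (N:ℝ) / t := by
      rw [le_div_iff₀ ht0]
      nlinarith
    have hexp : (N:ℝ) * (1 - 1/t) = (N:ℝ) - (N:ℝ)/t := by ring
    constructor
    · -- lower bound
      have : (N:ℝ) - a - 7 * a ≤ (N:ℝ) * (1 - 1/t) - 2*(t - 1) := by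
        rw [hexp]
        linarith
      linarith
    · -- upper bound
      rcases eq_or_lt_of_le hN with h1 | h2
      · -- N = 1
        have hN1' : N = 1 := h1.symm
        subst hN1'
        have hS : SBig 1 = 0 := by simp [SBig, sCount]
        have ha' : a = 1 := by rw [hta]; norm_num
        rw [hS, ha']
        norm_num
      · -- N ≥ 2
        have hlog : (1:ℝ) ≤ 7 * Real.log N := by
          have h2' : (2:ℝ) ≤ (N:ℝ) := by exact_mod_cast h2
          have := Real.log_le_log (by norm_num : (0:ℝ) < 2) h2'
          have hl2 := Real.log_two_gt_d9
          linarith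
        rw [hexp] at hupp
        linarith
  constructor
  · refine ⟨15, by norm_num, fun N hN => ?_⟩
    obtain ⟨hlow, hupp⟩ := key N hN
    have ha0 : (0:ℝ) < Real.sqrt N := by
      rw [Real.sqrt_pos]; exact_mod_cast hN
    have ha1 : (1:ℝ) ≤ Real.sqrt N := Real.one_le_sqrt.mpr (by exact_mod_cast hN)
    have hlogN : Real.log N ≤ 2 * Real.sqrt N := by
      have h2 := Real.log_sqrt (show (0:ℝ) ≤ (N:ℝ) by positivity)
      have h3 := Real.log_le_sub_one_of_pos ha0
      linarith
    rw [abs_le]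
    constructor
    · linarith
    · linarith
  · exact ⟨7, by norm_num, key⟩
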